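/- Consider the WPCS reward-maximization problem P1-A with N sensors: maximize Σ_{n=1}^N a_n·log(1+ℓ_n) − c·T₀·Σ_{n=1}^N P_n over variables ℓ_n ≥ 0, t_n > 0, P_n ≥ 0, subject to Σ_{n=1}^N P_n ≤ P₀, the time constraints β_n·ℓ_n + t_n ≤ T, and the energy constraints α_n·ℓ_n + (t_n/h_n)·f(ℓ_n/(R_n·t_n)) ≤ η·P_n·h_n·T₀. If (ℓ*, t*, P*) is a maximizer of this problem and ℓ_n* > 0 for every n, then for every n the time constraint holds with equality: β_n·ℓ_n* + t_n* = T. -/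

import Mathlib

open Real Finset

/-- Transmission-power function `f(x) = N₀ (2^{x/B} - 1)`. -/
noncomputable def fRate (N0 B x : ℝ) : ℝ := N0 * ((2 : ℝ) ^ (x / B) - 1)

lemma slope_exp_strictMono {u v : ℝ} (hu : 0 < u) (huv : u < v) :
    (Real.exp u - 1) / u < (Real.exp v - 1) / v := by
  have := strictConvexOn_exp.secant_strict_mono (a := 0) (x := u) (y := v)
    (Set.mem_univ _) (Set.mem_univ _) (Set.mem_univ _) (ne_of_gt hu)
    (ne_of_gt (hu.trans huv)) huv
  simpa using this

lemma gmono {k t₁ t₂ : ℝ} (hk : 0 < k) (h1 : 0 < t₁) (h12 : t₁ < t₂) :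
    t₂ * ((2:ℝ) ^ (k / t₂) - 1) < t₁ * ((2:ℝ) ^ (k / t₁) - 1) := by
  have h2 : 0 < t₂ := h1.trans h12
  have hl2 : (0:ℝ) < Real.log 2 := Real.log_pos one_lt_two
  set u := k / t₂ * Real.log 2 with hu
  set v := k / t₁ * Real.log 2 with hv
  have hu0 : 0 < u := by positivity
  have hv0 : 0 < v := by positivity
  have huv : u < v :=
    mul_lt_mul_of_pos_right (div_lt_div_of_pos_left hk h1 h12) hl2
  have key := slope_exp_strictMono hu0 huv
  have e2 : (2:ℝ) ^ (k / t₂) = Real.exp u := by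
    rw [Real.rpow_def_of_pos two_pos]; exact congrArg Real.exp (mul_comm _ _)
  have e1 : (2:ℝ) ^ (k / t₁) = Real.exp v := by
    rw [Real.rpow_def_of_pos two_pos]; exact congrArg Real.exp (mul_comm _ _)
  have h₂ : t₂ * (Real.exp u - 1) = (k * Real.log 2) * ((Real.exp u - 1) / u) := by
    rw [hu]; field_simp
  have h₁ : t₁ * (Real.exp v - 1) = (k * Real.log 2) * ((Real.exp v - 1) / v) := by
    rw [hv]; field_simp
  rw [e1, e2, h₁, h₂]
  exact mul_lt_mul_of_pos_left key (by positivity)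

/-- At a maximizer of Problem P1-A with strictly positive sensing-data sizes,
the time constraint is tight for every sensor. -/
theorem time_constraint_tight_at_optimum
    (N : ℕ) (hN : 0 < N)
    (N0 B c T0 P0 η T : ℝ)
    (hN0 : 0 < N0) (hB : 0 < B) (hc : 0 < c) (hT0 : 0 < T0)
    (hP0 : 0 < P0) (hη : 0 < η) (hT : 0 < T)
    (a α β h R : Fin N → ℝ)
    (ha : ∀ n, 0 < a n) (hα : ∀ n, 0 < α n) (hβ : ∀ n, 0 < β n)
    (hh : ∀ n, 0 < h n) (hR : ∀ n, 0 < R n)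
    (ℓs ts Ps : Fin N → ℝ)
    (hℓs : ∀ n, 0 < ℓs n) (hts : ∀ n, 0 < ts n) (hPs : ∀ n, 0 ≤ Ps n)
    (hPsum : ∑ n, Ps n ≤ P0)
    (htime : ∀ n, β n * ℓs n + ts n ≤ T)
    (henergy : ∀ n,
      α n * ℓs n + (ts n / h n) * fRate N0 B (ℓs n / (R n * ts n))
        ≤ η * Ps n * h n * T0)
    (hopt : ∀ ℓ t P : Fin N → ℝ,
      (∀ n, 0 ≤ ℓ n) → (∀ n, 0 < t n) → (∀ n, 0 ≤ P n) →
      (∑ n, P n ≤ P0) →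
      (∀ n, β n * ℓ n + t n ≤ T) →
      (∀ n, α n * ℓ n + (t n / h n) * fRate N0 B (ℓ n / (R n * t n))
          ≤ η * P n * h n * T0) →
      (∑ n, a n * Real.log (1 + ℓ n)) - c * T0 * (∑ n, P n)
        ≤ (∑ n, a n * Real.log (1 + ℓs n)) - c * T0 * (∑ n, Ps n)) :
    ∀ n, β n * ℓs n + ts n = T := by
  intro n₀
  by_contra hne
  have hslack : β n₀ * ℓs n₀ + ts n₀ < T := lt_of_le_of_ne (htime n₀) hne
  set t' := T - β n₀ * ℓs n₀ with ht'def
  have hts' : ts n₀ < t' := by simp [ht'def]; linarith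
  have ht'pos : 0 < t' := (hts n₀).trans hts'
  -- key strict decrease of the energy term
  set k := ℓs n₀ / (R n₀ * B) with hkdef
  have hk : 0 < k := div_pos (hℓs n₀) (mul_pos (hR n₀) hB)
  have harg : ∀ t : ℝ, 0 < t → ℓs n₀ / (R n₀ * t) / B = k / t := by
    intro t ht
    rw [hkdef]
    field_simp
  have hg := gmono hk (hts n₀) hts'
  have key : (t' / h n₀) * fRate N0 B (ℓs n₀ / (R n₀ * t'))
      < (ts n₀ / h n₀) * fRate N0 B (ℓs n₀ / (R n₀ * ts n₀)) := by
    unfold fRate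
    rw [harg t' ht'pos, harg (ts n₀) (hts n₀)]
    have hh0 := hh n₀
    have expand : ∀ t : ℝ, (t / h n₀) * (N0 * ((2:ℝ) ^ (k / t) - 1))
        = (N0 / h n₀) * (t * ((2:ℝ) ^ (k / t) - 1)) := by intro t; ring
    rw [expand, expand]
    exact mul_lt_mul_of_pos_left hg (div_pos hN0 (hh n₀))
  set E := α n₀ * ℓs n₀ + (t' / h n₀) * fRate N0 B (ℓs n₀ / (R n₀ * t')) with hEdef
  have hEpos : 0 < E := by
    have hfpos : 0 < fRate N0 B (ℓs n₀ / (R n₀ * t')) := by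
      unfold fRate
      rw [harg t' ht'pos]
      have h1 : (1:ℝ) < (2:ℝ) ^ (k / t') := by
        have : (2:ℝ) ^ (0:ℝ) < (2:ℝ) ^ (k / t') := by
          apply Real.rpow_lt_rpow_left_iff (x := (2:ℝ)) one_lt_two |>.2
          positivity
        simpa using this
      have := hh n₀
      nlinarith
    have h1 := mul_pos (div_pos ht'pos (hh n₀)) hfpos
    have h2 := mul_pos (hα n₀) (hℓs n₀)
    rw [hEdef]; linarith
  have hElt : E < η * Ps n₀ * h n₀ * T0 := by
    have := henergy n₀
    rw [hEdef]
    linarith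
  set Pv := E / (η * h n₀ * T0) with hPvdef
  have hPvpos : 0 < Pv := by
    have := hh n₀
    positivity
  have hPvlt : Pv < Ps n₀ := by
    rw [hPvdef, div_lt_iff₀ (by have := hh n₀; positivity)]
    nlinarith [hElt]
  -- new point
  set t2 := Function.update ts n₀ t' with ht2def
  set P2 := Function.update Ps n₀ Pv with hP2def
  have hsumP2 : ∑ n, P2 n = Pv + ∑ n ∈ univ.erase n₀, Ps n := by
    rw [hP2def, Finset.sum_update_of_mem (mem_univ n₀)]
    congr 1
    rw [Finset.sum_congr]
    · exact (Finset.sdiff_singleton_eq_erase n₀ univ)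
    · intros; rfl
  have hsumPs : ∑ n, Ps n = Ps n₀ + ∑ n ∈ univ.erase n₀, Ps n :=
    (Finset.add_sum_erase univ Ps (mem_univ n₀)).symm
  have hsumlt : ∑ n, P2 n < ∑ n, Ps n := by rw [hsumP2, hsumPs]; linarith
  have happ := hopt ℓs t2 P2
    (fun n => (hℓs n).le)
    (by
      intro n
      rw [ht2def, Function.update_apply]
      split
      · exact ht'pos
      · exact hts n)
    (by
      intro n
      rw [hP2def, Function.update_apply]
      split
      · exact hPvpos.le
      · exact hPs n)
    (le_trans hsumlt.le hPsum)
    (by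
      intro n
      rw [ht2def, Function.update_apply]
      split
      · rename_i hnn; subst hnn; rw [ht'def]; linarith
      · exact htime n)
    (by
      intro n
      rw [ht2def, hP2def, Function.update_apply, Function.update_apply]
      split
      · rename_i hnn
        rw [hnn]
        have heq : ∀ x : ℝ, η * (x / (η * h n₀ * T0)) * h n₀ * T0 = x := by
          intro x
          field_simp [hη.ne', (hh n₀).ne', hT0.ne']
        rw [hPvdef, heq E]
      · exact henergy n)
  have : c * T0 * (∑ n, P2 n) < c * T0 * (∑ n, Ps n) :=
    mul_lt_mul_of_pos_left hsumlt (by positivity)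
  linarith
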